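/- arXiv:1806.06921 — 2 statements merged into one kernel-verified Lean document; each statement's English description precedes it below -/
import Mathlib

section
/- The saddle solution u(x,y) = 4·arctan( cosh(y/√2) / cosh(x/√2) ) − π satisfies −Δu = sin u at every point of ℝ², and |u(x,y)| < π for all (x,y) ∈ ℝ². Moreover u vanishes exactly on the two lines y = x and y = −x. -/
/-- Partial derivative in the first variable of a function of two real variables. -/
noncomputable def pdx (u : ℝ → ℝ → ℝ) (x y : ℝ) : ℝ := deriv (fun s => u s y) x

/-- Partial derivative in the second variable of a function of two real variables. -/
noncomputable def pdy (u : ℝ → ℝ → ℝ) (x y : ℝ) : ℝ := deriv (fun t => u x t) y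

/-- The Laplacian of a function of two real variables. -/
noncomputable def lap (u : ℝ → ℝ → ℝ) (x y : ℝ) : ℝ := pdx (pdx u) x y + pdy (pdy u) x y

/-- The saddle solution of the elliptic sine-Gordon equation. -/
noncomputable def saddle (x y : ℝ) : ℝ :=
  4 * Real.arctan (Real.cosh (y / Real.sqrt 2) / Real.cosh (x / Real.sqrt 2)) - Real.pi


open Real

lemma FF_pos (x : ℝ) : 0 < Real.cosh (x / Real.sqrt 2) := Real.cosh_pos _
noncomputable def FF (x : ℝ) : ℝ := Real.cosh (x / Real.sqrt 2)
noncomputable def SS (x : ℝ) : ℝ := Real.sinh (x / Real.sqrt 2)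

lemma FF_pos' (x : ℝ) : 0 < FF x := FF_pos x
lemma FF_ne (x : ℝ) : FF x ≠ 0 := (FF_pos' x).ne'
lemma SS_sq (x : ℝ) : SS x ^ 2 = FF x ^ 2 - 1 := by
  have := Real.cosh_sq_sub_sinh_sq (x / Real.sqrt 2)
  unfold FF SS; nlinarith [this]

lemma sqrt2_pos : (0:ℝ) < Real.sqrt 2 := Real.sqrt_pos.2 (by norm_num)
lemma sqrt2_ne : (Real.sqrt 2) ≠ 0 := sqrt2_pos.ne'
lemma sqrt2_sq : (Real.sqrt 2) ^ 2 = 2 := Real.sq_sqrt (by norm_num)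

lemma hFF (x : ℝ) : HasDerivAt FF (SS x / Real.sqrt 2) x := by
  have h1 : HasDerivAt (fun s : ℝ => s / Real.sqrt 2) (1 / Real.sqrt 2) x := by
    simpa using (hasDerivAt_id x).div_const (Real.sqrt 2)
  have := (Real.hasDerivAt_cosh (x / Real.sqrt 2)).comp x h1
  show HasDerivAt (fun s => Real.cosh (s / Real.sqrt 2)) _ x
  simpa [FF, SS, div_eq_mul_inv, mul_comm, Function.comp_def] using this

lemma hSS (x : ℝ) : HasDerivAt SS (FF x / Real.sqrt 2) x := by
  have h1 : HasDerivAt (fun s : ℝ => s / Real.sqrt 2) (1 / Real.sqrt 2) x := by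
    simpa using (hasDerivAt_id x).div_const (Real.sqrt 2)
  have := (Real.hasDerivAt_sinh (x / Real.sqrt 2)).comp x h1
  show HasDerivAt (fun s => Real.sinh (s / Real.sqrt 2)) _ x
  simpa [FF, SS, div_eq_mul_inv, mul_comm, Function.comp_def] using this

lemma A_pos (x y : ℝ) : 0 < FF x ^ 2 + FF y ^ 2 := by
  have := FF_pos' x; have := FF_pos' y; positivity
lemma A_ne (x y : ℝ) : FF x ^ 2 + FF y ^ 2 ≠ 0 := (A_pos x y).ne'

lemma hD1x (x y : ℝ) : HasDerivAt (fun s => saddle s y)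
    (-(4 * FF y * SS x / Real.sqrt 2) / (FF x ^ 2 + FF y ^ 2)) x := by
  have h0 : HasDerivAt (fun s => FF y / FF s)
      ((0 * FF x - FF y * (SS x / Real.sqrt 2)) / (FF x) ^ 2) x :=
    (hasDerivAt_const x (FF y)).div (hFF x) (FF_ne x)
  have h2 := (h0.arctan.const_mul 4).sub_const Real.pi
  have heq : (fun s => 4 * Real.arctan (FF y / FF s) - Real.pi) = fun s => saddle s y := by
    funext s; simp [saddle, FF]
  rw [heq] at h2
  refine h2.congr_deriv (Eq.symm ?_)
  have hx := FF_ne x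
  have h1t : (0:ℝ) < (1 + (FF y / FF x) ^ 2) := by positivity
  field_simp
  ring

lemma hD1y (x y : ℝ) : HasDerivAt (fun t => saddle x t)
    ((4 * FF x * SS y / Real.sqrt 2) / (FF x ^ 2 + FF y ^ 2)) y := by
  have h0 : HasDerivAt (fun t => FF t / FF x) ((SS y / Real.sqrt 2) / FF x) y := by
    simpa using (hFF y).div_const (FF x)
  have h2 := (h0.arctan.const_mul 4).sub_const Real.pi
  have heq : (fun t => 4 * Real.arctan (FF t / FF x) - Real.pi) = fun t => saddle x t := by
    funext t; simp [saddle, FF]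
  rw [heq] at h2
  refine h2.congr_deriv (Eq.symm ?_)
  have hx := FF_ne x
  have h1t : (0:ℝ) < (1 + (FF y / FF x) ^ 2) := by positivity
  field_simp

lemma hD2x (x y : ℝ) : HasDerivAt (fun s => -(4 * FF y * SS s / Real.sqrt 2) / (FF s ^ 2 + FF y ^ 2))
    ((4 * FF y * FF x * (FF x ^ 2 - 1) - 2 * FF y * FF x * (FF x ^ 2 + FF y ^ 2)) /
      (FF x ^ 2 + FF y ^ 2) ^ 2) x := by
  have hN : HasDerivAt (fun s => -(4 * FF y * SS s / Real.sqrt 2))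
      (-(4 * FF y * (FF x / Real.sqrt 2) / Real.sqrt 2)) x :=
    (((hSS x).const_mul (4 * FF y)).div_const (Real.sqrt 2)).neg
  have hDen : HasDerivAt (fun s => FF s ^ 2 + FF y ^ 2) (2 * FF x * (SS x / Real.sqrt 2)) x := by
    have := ((hFF x).pow 2).add_const (FF y ^ 2)
    refine this.congr_deriv (Eq.symm ?_); ring
  have h := hN.div hDen (A_ne x y)
  refine h.congr_deriv (Eq.symm ?_)
  have hs2 := sqrt2_sq
  have hs2ne := sqrt2_ne
  have hsx := SS_sq x
  rw [div_eq_div_iff (pow_ne_zero 2 (A_ne x y)) (pow_ne_zero 2 (A_ne x y))]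
  field_simp
  linear_combination (-(8 * FF y * FF x * (FF x ^ 2 + FF y ^ 2) ^ 2)) * hsx + (-4 * FF x ^ 5 * FF y + 2 * FF x ^ 7 * FF y - 8 * FF x ^ 3 * FF y ^ 3 + 2 * FF x ^ 5 * FF y ^ 3 - 4 * FF x * FF y ^ 5 - 2 * FF x ^ 3 * FF y ^ 5 - 2 * FF x * FF y ^ 7) * hs2

lemma hD2y (x y : ℝ) : HasDerivAt (fun t => (4 * FF x * SS t / Real.sqrt 2) / (FF x ^ 2 + FF t ^ 2))
    ((2 * FF x * FF y * (FF x ^ 2 + FF y ^ 2) - 4 * FF x * FF y * (FF y ^ 2 - 1)) /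
      (FF x ^ 2 + FF y ^ 2) ^ 2) y := by
  have hN : HasDerivAt (fun t => 4 * FF x * SS t / Real.sqrt 2)
      (4 * FF x * (FF y / Real.sqrt 2) / Real.sqrt 2) y :=
    ((hSS y).const_mul (4 * FF x)).div_const (Real.sqrt 2)
  have hDen : HasDerivAt (fun t => FF x ^ 2 + FF t ^ 2) (2 * FF y * (SS y / Real.sqrt 2)) y := by
    have := ((hFF y).pow 2).const_add (FF x ^ 2)
    refine this.congr_deriv (Eq.symm ?_); ring
  have h := hN.div hDen (A_ne x y)
  refine h.congr_deriv (Eq.symm ?_)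
  have hs2 := sqrt2_sq
  have hs2ne := sqrt2_ne
  have hsy := SS_sq y
  rw [div_eq_div_iff (pow_ne_zero 2 (A_ne x y)) (pow_ne_zero 2 (A_ne x y))]
  field_simp
  linear_combination (8 * FF x * FF y * (FF x ^ 2 + FF y ^ 2) ^ 2) * hsy + (4 * FF x * FF y ^ 5 - 2 * FF x * FF y ^ 7 + 8 * FF x ^ 3 * FF y ^ 3 - 2 * FF x ^ 3 * FF y ^ 5 + 4 * FF x ^ 5 * FF y + 2 * FF x ^ 5 * FF y ^ 3 + 2 * FF x ^ 7 * FF y) * hs2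

theorem saddle_solves_sineGordon_and_nodal_set :
    ∀ x y : ℝ,
      (-(lap saddle x y) = Real.sin (saddle x y)) ∧
      |saddle x y| < Real.pi ∧
      (saddle x y = 0 ↔ (y = x ∨ y = -x)) := by
  intro x y
  have hxne := FF_ne x
  have hyne := FF_ne y
  have hxpos := FF_pos' x
  have hypos := FF_pos' y
  set t : ℝ := FF y / FF x with ht
  have htpos : 0 < t := div_pos hypos hxpos
  refine ⟨?_, ?_, ?_⟩
  · -- PDE
    have hpdx : (fun s => deriv (fun s' => saddle s' y) s)
        = fun s => -(4 * FF y * SS s / Real.sqrt 2) / (FF s ^ 2 + FF y ^ 2) := by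
      funext s; exact (hD1x s y).deriv
    have hpdy : (fun u => deriv (fun u' => saddle x u') u)
        = fun u => (4 * FF x * SS u / Real.sqrt 2) / (FF x ^ 2 + FF u ^ 2) := by
      funext u; exact (hD1y x u).deriv
    have hxx : pdx (pdx saddle) x y =
        (4 * FF y * FF x * (FF x ^ 2 - 1) - 2 * FF y * FF x * (FF x ^ 2 + FF y ^ 2)) /
          (FF x ^ 2 + FF y ^ 2) ^ 2 := by
      unfold pdx; rw [hpdx]; exact (hD2x x y).deriv
    have hyy : pdy (pdy saddle) x y =
        (2 * FF x * FF y * (FF x ^ 2 + FF y ^ 2) - 4 * FF x * FF y * (FF y ^ 2 - 1)) /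
          (FF x ^ 2 + FF y ^ 2) ^ 2 := by
      unfold pdy; rw [hpdy]; exact (hD2y x y).deriv
    have hsin : Real.sin (saddle x y) = -(4 * t * (1 - t ^ 2) / (1 + t ^ 2) ^ 2) := by
      have hval : saddle x y = 4 * Real.arctan t - Real.pi := by simp [saddle, FF, ht]
      rw [hval, Real.sin_sub_pi]
      have h4 : (4 : ℝ) * Real.arctan t = 2 * (2 * Real.arctan t) := by ring
      rw [h4, Real.sin_two_mul, Real.sin_two_mul, Real.cos_two_mul, Real.sin_arctan, Real.cos_arctan]
      have hs : Real.sqrt (1 + t ^ 2) ^ 2 = 1 + t ^ 2 := Real.sq_sqrt (by positivity)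
      have hsne : Real.sqrt (1 + t ^ 2) ≠ 0 := by positivity
      field_simp
      rw [show Real.sqrt (1 + t ^ 2) ^ 4 = (Real.sqrt (1 + t ^ 2) ^ 2) ^ 2 by ring, hs]; ring
    rw [hsin]
    unfold lap
    rw [hxx, hyy]
    have hAne := A_ne x y
    have h1t : (0:ℝ) < 1 + t ^ 2 := by positivity
    rw [ht]
    field_simp
    ring
  · -- bound
    have h1 : 0 < Real.arctan t := by
      rw [← Real.arctan_zero]; exact Real.arctan_strictMono htpos
    have h2 : Real.arctan t < Real.pi / 2 := Real.arctan_lt_pi_div_two t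
    have hval : saddle x y = 4 * Real.arctan t - Real.pi := by simp [saddle, FF, ht]
    rw [hval, abs_lt]
    constructor <;> nlinarith [Real.pi_pos]
  · -- nodal set
    have hval : saddle x y = 4 * Real.arctan t - Real.pi := by simp [saddle, FF, ht]
    rw [hval]
    constructor
    · intro h
      have harct : Real.arctan t = Real.pi / 4 := by linarith
      have ht1 : t = 1 := Real.arctan_injective (by rw [harct, Real.arctan_one])
      have hFeq : FF y = FF x := by
        rw [ht, div_eq_one_iff_eq hxne] at ht1; exact ht1
      have habs : |y / Real.sqrt 2| = |x / Real.sqrt 2| := by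
        by_contra hne
        rcases lt_or_gt_of_ne hne with h' | h'
        · exact absurd hFeq (ne_of_lt (Real.cosh_lt_cosh.2 h'))
        · exact absurd hFeq (ne_of_gt (Real.cosh_lt_cosh.2 h'))
      rw [abs_div, abs_div, abs_of_pos sqrt2_pos] at habs
      have habs2 : |y| = |x| := by
        field_simp at habs; exact habs
      exact abs_eq_abs.1 habs2
    · intro h
      have hFeq : FF y = FF x := by
        rcases h with h | h <;> subst h
        · rfl
        · unfold FF; rw [neg_div, Real.cosh_neg]
      have ht1 : t = 1 := by rw [ht, hFeq, div_self hxne]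
      rw [ht1, Real.arctan_one]; ring
end

section
/- Let p, q > 0 with p² + q² = 1. In the Hirota two-soliton formula take n = 2 with parameters p₁ = p₂ = p, q₁ = q, q₂ = −q and η₁⁰ = η₂⁰ = ln(q/p). Then for all (x,y) ∈ ℝ²: f(x,y) = 1 + e^{2px}, g(x,y) = 2(p/q)·e^{px}·cosh(qy), and 4·arctan(g(x,y)/f(x,y)) − π = 4·arctan((p·cosh(qy))/(q·cosh(px))) − π; that is, the four-end solution φ_{p,q} belongs to the Hirota family U₂ − π. -/
open Finset

/-- The phase functions of the Hirota ansatz. -/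
noncomputable def etaPhase {n : ℕ} (p q η0 : Fin n → ℝ) (j : Fin n) (x y : ℝ) : ℝ :=
  p j * x - q j * y - η0 j

/-- The interaction coefficients of the Hirota ansatz. -/
noncomputable def alphaCoef {n : ℕ} (p q : Fin n → ℝ) (j k : Fin n) : ℝ :=
  (((p j - p k) ^ 2 + (q j - q k) ^ 2)) / (((p j + p k) ^ 2 + (q j + q k) ^ 2))

/-- The coefficient `a(S) = ∏_{j<k, j,k ∈ S} α(j,k)` (empty products equal `1`). -/
noncomputable def aCoef {n : ℕ} (p q : Fin n → ℝ) (S : Finset (Fin n)) : ℝ :=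
  ∏ j ∈ S, ∏ k ∈ S.filter (fun k => j < k), alphaCoef p q j k

/-- The function `f` of the Hirota ansatz: sum over subsets of even cardinality. -/
noncomputable def hirotaF (n : ℕ) (p q η0 : Fin n → ℝ) (x y : ℝ) : ℝ :=
  ∑ S ∈ (Finset.univ : Finset (Fin n)).powerset.filter (fun S => Even S.card),
    aCoef p q S * Real.exp (∑ j ∈ S, etaPhase p q η0 j x y)

/-- The function `g` of the Hirota ansatz: sum over subsets of odd cardinality. -/
noncomputable def hirotaG (n : ℕ) (p q η0 : Fin n → ℝ) (x y : ℝ) : ℝ :=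
  ∑ S ∈ (Finset.univ : Finset (Fin n)).powerset.filter (fun S => Odd S.card),
    aCoef p q S * Real.exp (∑ j ∈ S, etaPhase p q η0 j x y)

/-- The Hirota `n`-soliton function `U_n = 4 arctan (g/f)`. -/
noncomputable def hirotaU (n : ℕ) (p q η0 : Fin n → ℝ) (x y : ℝ) : ℝ :=
  4 * Real.arctan (hirotaG n p q η0 x y / hirotaF n p q η0 x y)

theorem fourEnd_is_in_hirota_family (p q : ℝ) (hp : 0 < p) (hq : 0 < q)
    (hpq : p ^ 2 + q ^ 2 = 1) :
    let pv : Fin 2 → ℝ := ![p, p]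
    let qv : Fin 2 → ℝ := ![q, -q]
    let η0 : Fin 2 → ℝ := ![Real.log (q / p), Real.log (q / p)]
    ∀ x y : ℝ,
      hirotaF 2 pv qv η0 x y = 1 + Real.exp (2 * p * x) ∧
      hirotaG 2 pv qv η0 x y = 2 * (p / q) * Real.exp (p * x) * Real.cosh (q * y) ∧
      4 * Real.arctan (hirotaG 2 pv qv η0 x y / hirotaF 2 pv qv η0 x y) - Real.pi =
        4 * Real.arctan ((p * Real.cosh (q * y)) / (q * Real.cosh (p * x))) - Real.pi := by
  intro pv qv η0 x y
  have hF : hirotaF 2 pv qv η0 x y = 1 + Real.exp (2 * p * x) := by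
    have h1 : ((Finset.univ : Finset (Fin 2)).powerset.filter (fun S => Even S.card)) = {∅, ({0,1} : Finset (Fin 2))} := by decide
    have h2 : Finset.filter (fun k => (0:Fin 2) < k) {0,1} = {1} := by decide
    have h3 : Finset.filter (fun k => (1:Fin 2) < k) {0,1} = ∅ := by decide
    rw [hirotaF, h1, Finset.sum_pair (by decide)]
    simp only [pv, qv, η0, aCoef, alphaCoef, etaPhase, Finset.sum_pair (by decide : (0:Fin 2) ≠ 1),
      Finset.prod_pair (by decide : (0:Fin 2) ≠ 1), h2, h3, Finset.prod_singleton,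
      Finset.prod_empty, Finset.sum_empty, Finset.prod_const_one,
      Matrix.cons_val_zero, Matrix.cons_val_one, Matrix.head_cons, Real.exp_zero, mul_one, one_mul]
    rw [show p*x - q*y - Real.log (q/p) + (p*x - -q*y - Real.log (q/p))
          = 2*p*x - Real.log ((q/p)^2) by rw [Real.log_pow]; push_cast; ring,
        Real.exp_sub, Real.exp_log (by positivity)]
    field_simp
    ring
  have hG : hirotaG 2 pv qv η0 x y = 2 * (p / q) * Real.exp (p * x) * Real.cosh (q * y) := by
    have h1 : ((Finset.univ : Finset (Fin 2)).powerset.filter (fun S => Odd S.card)) = {{0}, ({1} : Finset (Fin 2))} := by decide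
    rw [hirotaG, h1, Finset.sum_pair (by decide)]
    simp only [pv, qv, η0, aCoef, alphaCoef, etaPhase, Finset.sum_singleton, Finset.prod_singleton,
      Finset.filter_singleton, lt_irrefl, if_false, Finset.prod_empty,
      Matrix.cons_val_zero, Matrix.cons_val_one, Matrix.head_cons, one_mul]
    rw [Real.cosh_eq]
    rw [show p*x - q*y - Real.log (q/p) = (p*x - Real.log (q/p)) + (-(q*y)) by ring,
        show p*x - -q*y - Real.log (q/p) = (p*x - Real.log (q/p)) + (q*y) by ring,
        Real.exp_add, Real.exp_add, Real.exp_sub, Real.exp_log (div_pos hq hp)]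
    field_simp
    ring
  refine ⟨hF, hG, ?_⟩
  rw [hF, hG]
  have hc : (1:ℝ) + Real.exp (2*p*x) = 2 * Real.exp (p*x) * Real.cosh (p*x) := by
    rw [Real.cosh_eq, Real.exp_neg, show 2*p*x = p*x + p*x by ring, Real.exp_add]
    have := Real.exp_ne_zero (p*x)
    field_simp
    ring
  rw [hc]
  have h1 : (0:ℝ) < Real.cosh (p*x) := Real.cosh_pos (p*x)
  have h2 : (0:ℝ) < Real.exp (p*x) := Real.exp_pos _
  have : 2 * (p/q) * Real.exp (p*x) * Real.cosh (q*y) / (2 * Real.exp (p*x) * Real.cosh (p*x))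
      = p * Real.cosh (q*y) / (q * Real.cosh (p*x)) := by
    field_simp
  rw [this]
end
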